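/- Let s₁ ≥ s₂ ≥ ⋯ ≥ s_m > 0, set s_{m+1} = 0, and write (Σ_{i=1}^m s_i)/s₁ = t + Δ where t ∈ {1, …, m} is an integer and 0 ≤ Δ < 1. If L₁ ≥ ⋯ ≥ L_m ≥ 0 satisfy Σ_{k=1}^i L_k ≤ α·i/(Σ_{k=1}^m s_k) for all i ≤ t, and Σ_{k=1}^i L_k ≤ α/s₁ for all i with t < i ≤ m, and Σᵢ sᵢLᵢ = 1, then α ≥ (Σ_{i=1}^m s_i)/(Σ_{i=1}^t s_i + Δ·s_{t+1}). -/

import Mathlib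

private lemma war_abel (s L : ℕ → ℝ) (n : ℕ) :
    ∑ i ∈ Finset.Icc 1 n, (s i - s (i+1)) * (∑ k ∈ Finset.Icc 1 i, L k)
      = ∑ i ∈ Finset.Icc 1 n, s i * L i - s (n+1) * ∑ k ∈ Finset.Icc 1 n, L k := by
  induction n with
  | zero => simp
  | succ n ih =>
    rw [Finset.sum_Icc_succ_top (by omega : 1 ≤ n+1),
        Finset.sum_Icc_succ_top (by omega : 1 ≤ n+1),
        Finset.sum_Icc_succ_top (by omega : 1 ≤ n+1), ih]
    ring

private lemma war_step2 (s : ℕ → ℝ) (t : ℕ) :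
    ∑ i ∈ Finset.Icc 1 t, (s i - s (i+1)) * (i : ℝ)
      = ∑ i ∈ Finset.Icc 1 t, s i - (t : ℝ) * s (t+1) := by
  induction t with
  | zero => simp
  | succ t ih =>
    rw [Finset.sum_Icc_succ_top (by omega : 1 ≤ t+1),
        Finset.sum_Icc_succ_top (by omega : 1 ≤ t+1), ih]
    push_cast
    ring

private lemma war_tele (f : ℕ → ℝ) (a : ℕ) : ∀ n, a ≤ n →
    ∑ i ∈ Finset.Ioc a n, (f i - f (i+1)) = f (a+1) - f (n+1) := by
  intro n
  induction n with
  | zero => intro h; interval_cases a; simp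
  | succ n ih =>
    intro h
    rcases Nat.lt_or_ge a (n+1) with h' | h'
    · have han : a ≤ n := by omega
      rw [Finset.sum_Ioc_succ_top han, ih han]
      ring
    · have : a = n + 1 := by omega
      subst this
      simp


/-- Lower bound for the weak simultaneous approximation ratio on related machines
with fixed speeds: if `s₁ ≥ ⋯ ≥ s_m > 0`, `s_{m+1} = 0`,
`(Σᵢ sᵢ)/s₁ = t + Δ` with `1 ≤ t ≤ m` and `0 ≤ Δ < 1`, and the nonincreasing
nonnegative loads `L` satisfy the prefix bounds `Σ_{k≤i} L_k ≤ α·i/Σ s_k` for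
`i ≤ t`, `Σ_{k≤i} L_k ≤ α/s₁` for `t < i ≤ m`, together with `Σᵢ sᵢLᵢ = 1`, then
`α ≥ (Σᵢ sᵢ)/(Σ_{i≤t} sᵢ + Δ·s_{t+1})`. -/
theorem war_fractional_lower (m t : ℕ) (s L : ℕ → ℝ) (α Δ : ℝ)
    (hm : 1 ≤ m)
    (hs : ∀ i j, 1 ≤ i → i ≤ j → j ≤ m → s j ≤ s i)
    (hspos : ∀ i, 1 ≤ i → i ≤ m → 0 < s i)
    (hstop : s (m + 1) = 0)
    (ht1 : 1 ≤ t) (htm : t ≤ m)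
    (hΔ0 : 0 ≤ Δ) (hΔ1 : Δ < 1)
    (hdec : (∑ i ∈ Finset.Icc 1 m, s i) / s 1 = (t : ℝ) + Δ)
    (hL : ∀ i j, 1 ≤ i → i ≤ j → j ≤ m → L j ≤ L i)
    (hL0 : ∀ i, 1 ≤ i → i ≤ m → 0 ≤ L i)
    (h1 : ∀ i, 1 ≤ i → i ≤ t →
      ∑ k ∈ Finset.Icc 1 i, L k ≤ α * i / (∑ k ∈ Finset.Icc 1 m, s k))
    (h2 : ∀ i, t < i → i ≤ m → ∑ k ∈ Finset.Icc 1 i, L k ≤ α / s 1)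
    (heq : ∑ i ∈ Finset.Icc 1 m, s i * L i = 1) :
    (∑ i ∈ Finset.Icc 1 m, s i) / (∑ i ∈ Finset.Icc 1 t, s i + Δ * s (t + 1)) ≤ α := by
  set S := ∑ i ∈ Finset.Icc 1 m, s i with hSdef
  set P : ℕ → ℝ := fun i => ∑ k ∈ Finset.Icc 1 i, L k with hPdef
  have hs1 : 0 < s 1 := hspos 1 le_rfl hm
  have hS : 0 < S := by
    apply Finset.sum_pos
    · intro i hi
      simp only [Finset.mem_Icc] at hi
      exact hspos i hi.1 hi.2
    · exact ⟨1, by simp [Finset.mem_Icc, hm]⟩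
  have hT : 0 < ∑ i ∈ Finset.Icc 1 t, s i := by
    apply Finset.sum_pos
    · intro i hi
      simp only [Finset.mem_Icc] at hi
      exact hspos i hi.1 (le_trans hi.2 htm)
    · exact ⟨1, by simp [Finset.mem_Icc, ht1]⟩
  have hst1 : 0 ≤ s (t+1) := by
    rcases Nat.lt_or_ge t m with h | h
    · exact (hspos (t+1) (by omega) (by omega)).le
    · have : t = m := le_antisymm htm h
      rw [this, hstop]
  have hcoef : ∀ i, 1 ≤ i → i ≤ m → 0 ≤ s i - s (i+1) := by
    intro i h1i him
    rcases Nat.lt_or_ge i m with h | h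
    · have := hs i (i+1) h1i (by omega) (by omega)
      linarith
    · have : i = m := le_antisymm him h
      rw [this, hstop]
      simpa using (hspos m hm le_rfl).le
  have hD : 0 < ∑ i ∈ Finset.Icc 1 t, s i + Δ * s (t+1) := by
    have : 0 ≤ Δ * s (t+1) := mul_nonneg hΔ0 hst1
    linarith
  -- Abel summation
  have habel : ∑ i ∈ Finset.Icc 1 m, (s i - s (i+1)) * P i = 1 := by
    rw [war_abel s L m, hstop, heq]
    ring
  -- split the sum
  have hicc : ∀ k : ℕ, Finset.Icc 1 k = Finset.Ioc 0 k := by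
    intro k; rw [← Finset.Icc_add_one_left_eq_Ioc, zero_add]
  have hsplit :
      (∑ i ∈ Finset.Icc 1 t, (s i - s (i+1)) * P i)
        + ∑ i ∈ Finset.Ioc t m, (s i - s (i+1)) * P i
      = ∑ i ∈ Finset.Icc 1 m, (s i - s (i+1)) * P i := by
    rw [hicc t, hicc m]
    exact Finset.sum_Ioc_consecutive _ (Nat.zero_le t) htm
  -- bound the first part
  have hb1 : ∑ i ∈ Finset.Icc 1 t, (s i - s (i+1)) * P i
      ≤ (α / S) * (∑ i ∈ Finset.Icc 1 t, s i - (t : ℝ) * s (t+1)) := by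
    rw [← war_step2 s t, Finset.mul_sum]
    apply Finset.sum_le_sum
    intro i hi
    simp only [Finset.mem_Icc] at hi
    have h1' := h1 i hi.1 hi.2
    have hc := hcoef i hi.1 (le_trans hi.2 htm)
    calc (s i - s (i+1)) * P i ≤ (s i - s (i+1)) * (α * i / S) :=
          mul_le_mul_of_nonneg_left h1' hc
      _ = α / S * ((s i - s (i+1)) * (i : ℝ)) := by ring
  -- bound the second part
  have hb2 : ∑ i ∈ Finset.Ioc t m, (s i - s (i+1)) * P i
      ≤ (α / s 1) * s (t+1) := by
    have htel : ∑ i ∈ Finset.Ioc t m, (s i - s (i+1)) = s (t+1) - s (m+1) :=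
      war_tele s t m htm
    calc ∑ i ∈ Finset.Ioc t m, (s i - s (i+1)) * P i
        ≤ ∑ i ∈ Finset.Ioc t m, (s i - s (i+1)) * (α / s 1) := by
          apply Finset.sum_le_sum
          intro i hi
          simp only [Finset.mem_Ioc] at hi
          exact mul_le_mul_of_nonneg_left (h2 i hi.1 hi.2)
            (hcoef i (by omega) hi.2)
      _ = (s (t+1) - s (m+1)) * (α / s 1) := by rw [← Finset.sum_mul, htel]
      _ = (α / s 1) * s (t+1) := by rw [hstop]; ring
  have hkey : (1 : ℝ) ≤ (α / S) * (∑ i ∈ Finset.Icc 1 t, s i - (t : ℝ) * s (t+1))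
      + (α / s 1) * s (t+1) := by
    rw [← habel, ← hsplit]
    exact add_le_add hb1 hb2
  -- use hdec : S / s 1 = t + Δ, i.e. S = s 1 * (t + Δ)
  have hSeq : S = s 1 * ((t : ℝ) + Δ) := by
    field_simp at hdec
    linarith [hdec]
  have hrw : (α / s 1) * s (t+1) = (α / S) * (((t : ℝ) + Δ) * s (t+1)) := by
    rw [hSeq]
    field_simp
  have hkey2 : (1 : ℝ) ≤ (α / S) * (∑ i ∈ Finset.Icc 1 t, s i + Δ * s (t+1)) := by
    calc (1 : ℝ) ≤ (α / S) * (∑ i ∈ Finset.Icc 1 t, s i - (t : ℝ) * s (t+1))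
        + (α / s 1) * s (t+1) := hkey
      _ = (α / S) * (∑ i ∈ Finset.Icc 1 t, s i + Δ * s (t+1)) := by
          rw [hrw]; ring
  rw [div_le_iff₀ hD]
  have : S ≤ α * (∑ i ∈ Finset.Icc 1 t, s i + Δ * s (t+1)) := by
    have := mul_le_mul_of_nonneg_left hkey2 hS.le
    rw [mul_one] at this
    calc S ≤ S * ((α / S) * (∑ i ∈ Finset.Icc 1 t, s i + Δ * s (t+1))) := this
      _ = α * (∑ i ∈ Finset.Icc 1 t, s i + Δ * s (t+1)) := by
          field_simp
  exact this
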